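/- arXiv:1504.01242 — 3 statements merged into one kernel-verified Lean document; each statement's English description precedes it below -/
import Mathlib

section
/- For every integer k ≥ 2, the curve C_{2k+1}: f = 0 with f = (y^{k−1}z + x^k)²·y − x^{2k+1} ∈ ℂ[x,y,z] has total Tjurina number τ(C_{2k+1}) = 3k²; that is, m(f)_m = 3k² for all sufficiently large m. -/
open MvPolynomial

noncomputable section

/-- The polynomial ring `S = ℂ[x,y,z]`. -/
abbrev S3 : Type := MvPolynomial (Fin 3) ℂ

/-- The Jacobian ideal of `f`, generated by the three partial derivatives. -/
def jacobianIdeal (f : S3) : Ideal S3 :=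
  Ideal.span {pderiv 0 f, pderiv 1 f, pderiv 2 f}

/-- The dimension `m(f)_k` of the degree `k` homogeneous component of the
Milnor algebra `M(f) = S/J_f`. -/
def milnorDim (f : S3) (k : ℕ) : ℕ :=
  Module.finrank ℂ (Submodule.map (Ideal.Quotient.mkₐ ℂ (jacobianIdeal f)).toLinearMap
    (homogeneousSubmodule (Fin 3) ℂ k))

/-- The `S`-linear map `(a,b,c) ↦ a f_x + b f_y + c f_z`. -/
def relMap (f : S3) : (Fin 3 → S3) →ₗ[S3] S3 where
  toFun ρ := ∑ i, ρ i * pderiv i f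
  map_add' a b := by simp [add_mul, Finset.sum_add_distrib]
  map_smul' c a := by simp [Finset.mul_sum, mul_assoc]

/-- The module `AR(f)` of all relations among the partial derivatives of `f`. -/
def AR (f : S3) : Submodule S3 (Fin 3 → S3) := LinearMap.ker (relMap f)

/-- The degree `m` graded piece `AR(f)_m`, as a `ℂ`-subspace of `S³`. -/
def ARgr (f : S3) (m : ℕ) : Submodule ℂ (Fin 3 → S3) :=
  (LinearMap.ker ((relMap f).restrictScalars ℂ)) ⊓
    Submodule.pi Set.univ (fun _ => homogeneousSubmodule (Fin 3) ℂ m)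

/-- `ar(f)_m = dim_ℂ AR(f)_m`. -/
def arDim (f : S3) (m : ℕ) : ℕ := Module.finrank ℂ (ARgr f m)

/-- A vector of polynomials is homogeneous of degree `m` if all components are. -/
def IsHomogVec (ρ : Fin 3 → S3) (m : ℕ) : Prop := ∀ i, (ρ i).IsHomogeneous m

/-- `C : f = 0` is a free divisor with exponents `d₁, d₂` if `AR(f)` is a free
`S`-module with a homogeneous basis in degrees `d₁` and `d₂`. -/
def IsFreeDivisorWith (f : S3) (d₁ d₂ : ℕ) : Prop :=
  ∃ b : Module.Basis (Fin 2) S3 (AR f),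
    IsHomogVec (↑(b 0)) d₁ ∧ IsHomogVec (↑(b 1)) d₂

/-- `C : f = 0` is a free divisor if `AR(f)` is a free graded `S`-module of rank two. -/
def IsFreeDivisor (f : S3) : Prop := ∃ d₁ d₂ : ℕ, IsFreeDivisorWith f d₁ d₂

/-- `binom(a, 2)` for an integer `a`, zero when `a < 2`. -/
def chooseTwo (a : ℤ) : ℤ := (a.toNat).choose 2

/-- The Hilbert function `m(f_s)_k` of the Milnor algebra of a smooth plane curve
of degree `d`. -/
def smoothMilnorDim (d : ℕ) (k : ℤ) : ℤ :=
  chooseTwo (k + 2) - 3 * chooseTwo (k - d + 3) + 3 * chooseTwo (k - 2 * d + 4)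
    - chooseTwo (k - 3 * d + 5)

/-- `m(f)_k` extended to integer indices by zero. -/
def milnorDimZ (f : S3) (k : ℤ) : ℤ := if k < 0 then 0 else milnorDim f k.toNat

/-- `ar(f)_m` extended to integer indices by zero. -/
def arDimZ (f : S3) (m : ℤ) : ℤ := if m < 0 then 0 else arDim f m.toNat

/-- The coincidence threshold `ct(f)`. -/
def ctf (f : S3) (d : ℕ) : ℕ :=
  sSup {q : ℕ | ∀ k ≤ q, (milnorDim f k : ℤ) = smoothMilnorDim d k}

/-- The stability threshold `st(f)`. -/
def stf (f : S3) (τ : ℕ) : ℕ := sInf {q : ℕ | ∀ k ≥ q, milnorDim f k = τ}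

/-- `mdr(f)`, the minimal degree of a syzygy. -/
def mdr (f : S3) : ℕ := sInf {q : ℕ | ARgr f q ≠ ⊥}

/-- The irrelevant maximal ideal `(x,y,z)`. -/
def maxIdeal3 : Ideal S3 := Ideal.span {X 0, X 1, X 2}

/-- The saturation `I_f` of the Jacobian ideal with respect to `(x,y,z)`. -/
def satJacobian (f : S3) : Ideal S3 := ⨆ n : ℕ, (jacobianIdeal f).colon ((maxIdeal3 ^ n : Ideal S3) : Set S3)

namespace Stmt15Aux


def degSet (n : ℕ) : Set (Fin 3 →₀ ℕ) := {d | d.degree = n}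

def symEquivDeg (n : ℕ) : Sym (Fin 3) n ≃ degSet n :=
  Equiv.subtypeEquiv Multiset.toFinsupp.toEquiv (by
    intro m
    constructor
    · rintro rfl
      have h1 : (Multiset.toFinsupp.toEquiv m) = Multiset.toFinsupp m := rfl
      rw [h1]
      show Finsupp.degree (Multiset.toFinsupp m) = Multiset.card m
      rw [show Finsupp.degree (Multiset.toFinsupp m) = (Multiset.toFinsupp m).sum (fun _ => id)
        from rfl, Multiset.toFinsupp_sum_eq]
    · intro h
      have h1 : (Multiset.toFinsupp.toEquiv m) = Multiset.toFinsupp m := rfl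
      rw [h1] at h
      have h2 : (Multiset.toFinsupp m).sum (fun _ => id) = n := h
      rwa [Multiset.toFinsupp_sum_eq] at h2)

instance (n : ℕ) : Fintype (degSet n) := Fintype.ofEquiv _ (symEquivDeg n)

lemma card_degSet (n : ℕ) : Fintype.card (degSet n) = (n + 2).choose 2 := by
  rw [← Fintype.card_congr (symEquivDeg n), Sym.card_sym_eq_choose]
  have h3 : Fintype.card (Fin 3) = 3 := by simp
  rw [h3, show 3 + n - 1 = n + 2 by omega]
  have hs := Nat.choose_symm (show 2 ≤ n + 2 by omega)
  rw [show n + 2 - 2 = n by omega] at hs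
  rw [hs]

lemma finrank_V (n : ℕ) :
    Module.finrank ℂ (homogeneousSubmodule (Fin 3) ℂ n) = (n + 2).choose 2 := by
  have e : (homogeneousSubmodule (Fin 3) ℂ n) ≃ₗ[ℂ] (degSet n →₀ ℂ) :=
    (LinearEquiv.ofEq _ _ (homogeneousSubmodule_eq_finsupp_supported (Fin 3) ℂ n)).trans
      (AddMonoidAlgebra.supportedEquivFinsupp (degSet n))
  rw [e.finrank_eq, Module.finrank_finsupp, Module.finrank_self, mul_one, card_degSet]

instance fdV (n : ℕ) : FiniteDimensional ℂ (homogeneousSubmodule (Fin 3) ℂ n) := by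
  have e : (homogeneousSubmodule (Fin 3) ℂ n) ≃ₗ[ℂ] (degSet n →₀ ℂ) :=
    (LinearEquiv.ofEq _ _ (homogeneousSubmodule_eq_finsupp_supported (Fin 3) ℂ n)).trans
      (AddMonoidAlgebra.supportedEquivFinsupp (degSet n))
  exact Module.Finite.equiv e.symm

lemma two_mul_choose (n : ℕ) : 2 * ((n + 2).choose 2) = (n + 1) * (n + 2) := by
  induction n with
  | zero => decide
  | succ n ih =>
      have h : (n + 1 + 2).choose 2 = (n + 2).choose 1 + (n + 2).choose 2 := by
        simpa using Nat.choose_succ_succ (n + 2) 1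
      rw [h, Nat.choose_one_right]
      nlinarith [ih]


lemma hc_mul {h : S3} {e2 : ℕ} (hh : h.IsHomogeneous e2) (e : ℕ) (q : S3) :
    homogeneousComponent (e + e2) (q * h) = homogeneousComponent e q * h := by
  conv_lhs => rw [← sum_homogeneousComponent q, Finset.sum_mul, map_sum]
  have hterm : ∀ i ∈ Finset.range (q.totalDegree + 1),
      homogeneousComponent (e + e2) (homogeneousComponent i q * h)
        = if e = i then homogeneousComponent i q * h else 0 := by
    intro i _
    have hmem : homogeneousComponent i q * h ∈ homogeneousSubmodule (Fin 3) ℂ (i + e2) :=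
      (mem_homogeneousSubmodule _ _).2 ((homogeneousComponent_isHomogeneous i q).mul hh)
    rw [homogeneousComponent_of_mem hmem]
    congr 1
    simp only [eq_iff_iff]
    omega
  rw [Finset.sum_congr rfl hterm, Finset.sum_ite_eq]
  by_cases he : e ∈ Finset.range (q.totalDegree + 1)
  · rw [if_pos he]
  · rw [if_neg he]
    have : q.totalDegree < e := by simpa using he
    rw [homogeneousComponent_eq_zero _ _ this, zero_mul]

lemma mem_span_triple {a b c x : S3} (h : x ∈ Ideal.span {a, b, c}) :
    ∃ q0 q1 q2 : S3, x = q0 * a + q1 * b + q2 * c := by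
  rw [show ({a, b, c} : Set S3) = insert a (insert b {c}) from rfl] at h
  rw [Ideal.mem_span_insert] at h
  obtain ⟨q0, z, hz, rfl⟩ := h
  rw [Ideal.mem_span_insert] at hz
  obtain ⟨q1, w, hw, rfl⟩ := hz
  rw [Ideal.mem_span_singleton'] at hw
  obtain ⟨q2, rfl⟩ := hw
  exact ⟨q0, q1, q2, by ring⟩

set_option maxHeartbeats 2000000 in
/-- Syzygy classification via Saito-type argument. -/
lemma classify (F s0 s1 s2 u0 u1 u2 v0 v1 v2 cS dS : S3)
    (hcu : IsUnit cS) (hdS : dS ≠ 0) (hF0 : F ≠ 0) (hs2 : s2 ≠ 0)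
    (heuler : X 0 * s0 + X 1 * s1 + X 2 * s2 = dS * F)
    (hu : u0 * s0 + u1 * s1 + u2 * s2 = 0)
    (hv : v0 * s0 + v1 * s1 + v2 * s2 = 0)
    (hdet : u0 * (v1 * X 2 - v2 * X 1) - u1 * (v0 * X 2 - v2 * X 0)
        + u2 * (v0 * X 1 - v1 * X 0) = cS * F)
    (hcop : ∀ A : S3, F ∣ A * s2 → F ∣ A)
    (r0 r1 r2 : S3) (hr : r0 * s0 + r1 * s1 + r2 * s2 = 0) :
    ∃ A B : S3, r0 = A * u0 + B * v0 ∧ r1 = A * u1 + B * v1 ∧ r2 = A * u2 + B * v2 := by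
  have hcS0 : cS ≠ 0 := hcu.ne_zero
  -- key : cS * s2 = dS * (u0 * v1 - u1 * v0)
  have hkey : cS * s2 = dS * (u0 * v1 - u1 * v0) := by
    have h1 : F * (cS * s2) = F * (dS * (u0 * v1 - u1 * v0)) := by
      linear_combination (norm := ring_nf) (-s2) * hdet + (v0 * X 1 - v1 * X 0) * hu
        - (u0 * X 1 - u1 * X 0) * hv + (u0 * v1 - u1 * v0) * heuler
    exact mul_left_cancel₀ hF0 h1
  have hC33 : u0 * v1 - u1 * v0 ≠ 0 := by
    intro h0
    exact (mul_ne_zero hcS0 hs2) (by rw [hkey, h0, mul_zero])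
  -- G = det(u,v,r) = 0
  have hG : u0 * (v1 * r2 - v2 * r1) - u1 * (v0 * r2 - v2 * r0)
      + u2 * (v0 * r1 - v1 * r0) = 0 := by
    have h1 : (u0 * (v1 * r2 - v2 * r1) - u1 * (v0 * r2 - v2 * r0)
        + u2 * (v0 * r1 - v1 * r0)) * s2 = 0 := by
      linear_combination (norm := ring_nf) (v0 * r1 - v1 * r0) * hu
        - (u0 * r1 - u1 * r0) * hv + (u0 * v1 - u1 * v0) * hr
    exact (mul_eq_zero.1 h1).resolve_right hs2
  obtain ⟨A, hA⟩ : ∃ A : S3, A = r0 * (v1 * X 2 - v2 * X 1) - r1 * (v0 * X 2 - v2 * X 0)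
      + r2 * (v0 * X 1 - v1 * X 0) := ⟨_, rfl⟩
  obtain ⟨B, hB⟩ : ∃ B : S3, B = u0 * (r1 * X 2 - r2 * X 1) - u1 * (r0 * X 2 - r2 * X 0)
      + u2 * (r0 * X 1 - r1 * X 0) := ⟨_, rfl⟩
  -- Cramer: cS * F * r_i = A * u_i + B * v_i
  have e0 : cS * F * r0 = A * u0 + B * v0 := by
    linear_combination (norm := ring_nf) (-r0) * hdet + X 0 * hG - u0 * hA - v0 * hB
  have e1 : cS * F * r1 = A * u1 + B * v1 := by
    linear_combination (norm := ring_nf) (-r1) * hdet + X 1 * hG - u1 * hA - v1 * hB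
  have e2 : cS * F * r2 = A * u2 + B * v2 := by
    linear_combination (norm := ring_nf) (-r2) * hdet + X 2 * hG - u2 * hA - v2 * hB
  -- divisibility
  have hdA : F ∣ A * (u0 * v1 - u1 * v0) :=
    ⟨cS * (r0 * v1 - r1 * v0), by linear_combination (norm := ring_nf) (-v1) * e0 + v0 * e1⟩
  have hdB : F ∣ B * (u0 * v1 - u1 * v0) :=
    ⟨cS * (u0 * r1 - u1 * r0), by linear_combination (norm := ring_nf) u1 * e0 - u0 * e1⟩
  have hFA : F ∣ cS * A := by
    apply hcop
    have : (cS * A) * s2 = dS * (A * (u0 * v1 - u1 * v0)) := by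
      linear_combination (norm := ring_nf) A * hkey
    rw [this]
    exact Dvd.dvd.mul_left hdA dS
  have hFB : F ∣ cS * B := by
    apply hcop
    have : (cS * B) * s2 = dS * (B * (u0 * v1 - u1 * v0)) := by
      linear_combination (norm := ring_nf) B * hkey
    rw [this]
    exact Dvd.dvd.mul_left hdB dS
  obtain ⟨w, hw⟩ := hcu.exists_left_inv
  have hFA' : F ∣ A := by
    obtain ⟨q, hq⟩ := hFA
    exact ⟨w * q, by linear_combination (norm := ring_nf) w * hq - A * hw⟩
  have hFB' : F ∣ B := by
    obtain ⟨q, hq⟩ := hFB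
    exact ⟨w * q, by linear_combination (norm := ring_nf) w * hq - B * hw⟩
  obtain ⟨A1, hA1⟩ := hFA'
  obtain ⟨B1, hB1⟩ := hFB'
  have hcF : cS * F ≠ 0 := mul_ne_zero hcS0 hF0
  refine ⟨w * A1, w * B1, ?_, ?_, ?_⟩
  · have hgoal : cS * F * r0 = cS * F * (w * A1 * u0 + w * B1 * v0) := by
      linear_combination (norm := ring_nf) e0 + u0 * hA1 + v0 * hB1
        - (F * A1 * u0 + F * B1 * v0) * hw
    exact mul_left_cancel₀ hcF hgoal
  · have hgoal : cS * F * r1 = cS * F * (w * A1 * u1 + w * B1 * v1) := by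
      linear_combination (norm := ring_nf) e1 + u1 * hA1 + v1 * hB1
        - (F * A1 * u1 + F * B1 * v1) * hw
    exact mul_left_cancel₀ hcF hgoal
  · have hgoal : cS * F * r2 = cS * F * (w * A1 * u2 + w * B1 * v2) := by
      linear_combination (norm := ring_nf) e2 + u2 * hA1 + v2 * hB1
        - (F * A1 * u2 + F * B1 * v2) * hw
    exact mul_left_cancel₀ hcF hgoal

lemma homog_cast {p : S3} {a b : ℕ} (h : p.IsHomogeneous a) (hab : a = b) :
    p.IsHomogeneous b := hab ▸ h

lemma C33_ne (F s0 s1 s2 u0 u1 u2 v0 v1 v2 cS dS : S3)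
    (hcS0 : cS ≠ 0) (hF0 : F ≠ 0) (hs2 : s2 ≠ 0)
    (heuler : X 0 * s0 + X 1 * s1 + X 2 * s2 = dS * F)
    (hu : u0 * s0 + u1 * s1 + u2 * s2 = 0)
    (hv : v0 * s0 + v1 * s1 + v2 * s2 = 0)
    (hdet : u0 * (v1 * X 2 - v2 * X 1) - u1 * (v0 * X 2 - v2 * X 0)
        + u2 * (v0 * X 1 - v1 * X 0) = cS * F) :
    u0 * v1 - u1 * v0 ≠ 0 := by
  have hkey : cS * s2 = dS * (u0 * v1 - u1 * v0) := by
    have h1 : F * (cS * s2) = F * (dS * (u0 * v1 - u1 * v0)) := by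
      linear_combination (norm := ring_nf) (-s2) * hdet + (v0 * X 1 - v1 * X 0) * hu
        - (u0 * X 1 - u1 * X 0) * hv + (u0 * v1 - u1 * v0) * heuler
    exact mul_left_cancel₀ hF0 h1
  intro h0
  exact (mul_ne_zero hcS0 hs2) (by rw [hkey, h0, mul_zero])

set_option maxHeartbeats 2000000 in
set_option synthInstance.maxHeartbeats 400000 in
lemma master (F : S3) (kk t : ℕ) (u0 u1 u2 v0 v1 v2 cS dS : S3)
    (hcu : IsUnit cS) (hdS : dS ≠ 0) (hF0 : F ≠ 0) (hs2 : pderiv 2 F ≠ 0)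
    (hhs0 : (pderiv 0 F).IsHomogeneous (2 * kk))
    (hhs1 : (pderiv 1 F).IsHomogeneous (2 * kk))
    (hhs2 : (pderiv 2 F).IsHomogeneous (2 * kk))
    (hhu0 : u0.IsHomogeneous kk) (hhu1 : u1.IsHomogeneous kk) (hhu2 : u2.IsHomogeneous kk)
    (hhv0 : v0.IsHomogeneous kk) (hhv1 : v1.IsHomogeneous kk) (hhv2 : v2.IsHomogeneous kk)
    (heuler : X 0 * pderiv 0 F + X 1 * pderiv 1 F + X 2 * pderiv 2 F = dS * F)
    (hu : u0 * pderiv 0 F + u1 * pderiv 1 F + u2 * pderiv 2 F = 0)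
    (hv : v0 * pderiv 0 F + v1 * pderiv 1 F + v2 * pderiv 2 F = 0)
    (hdet : u0 * (v1 * X 2 - v2 * X 1) - u1 * (v0 * X 2 - v2 * X 0)
        + u2 * (v0 * X 1 - v1 * X 0) = cS * F)
    (hcop : ∀ A : S3, F ∣ A * pderiv 2 F → F ∣ A) :
    milnorDim F (3 * kk + t) + 3 * ((kk + t + 2).choose 2)
      = (3 * kk + t + 2).choose 2 + 2 * ((t + 2).choose 2) := by
  set s0 := pderiv 0 F
  set s1 := pderiv 1 F
  set s2 := pderiv 2 F
  set m := 3 * kk + t with hm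
  set e := kk + t with he
  set Vm := homogeneousSubmodule (Fin 3) ℂ m
  set Ve := homogeneousSubmodule (Fin 3) ℂ e
  set Vt := homogeneousSubmodule (Fin 3) ℂ t
  set J := jacobianIdeal F with hJ
  set JV : Submodule ℂ S3 := Submodule.restrictScalars ℂ J
  set W : Submodule ℂ S3 := JV ⊓ Vm with hW
  set T : S3 →ₗ[ℂ] (S3 ⧸ J) := (Ideal.Quotient.mkₐ ℂ J).toLinearMap with hT
  -- Step 1: milnorDim = finrank of range
  have hker_T : LinearMap.ker T = JV := by
    ext x
    simp only [LinearMap.mem_ker, hT, AlgHom.toLinearMap_apply, Ideal.Quotient.mkₐ_eq_mk,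
      Submodule.restrictScalars_mem]
    exact Ideal.Quotient.eq_zero_iff_mem
  have hstep1 : milnorDim F m + Module.finrank ℂ W = Module.finrank ℂ Vm := by
    have h1 : Submodule.map T Vm = LinearMap.range (T ∘ₗ Vm.subtype) := by
      rw [LinearMap.range_comp, Submodule.range_subtype]
    have h2 := LinearMap.finrank_range_add_finrank_ker (T ∘ₗ Vm.subtype)
    have h3 : LinearMap.ker (T ∘ₗ Vm.subtype) = Submodule.comap Vm.subtype W := by
      rw [LinearMap.ker_comp, hker_T]
      ext x
      simp only [Submodule.mem_comap, hW, Submodule.mem_inf]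
      exact ⟨fun h => ⟨h, x.2⟩, fun h => h.1⟩
    have h4 : Module.finrank ℂ (Submodule.comap Vm.subtype W) = Module.finrank ℂ W :=
      (Submodule.comapSubtypeEquivOfLe (inf_le_right : W ≤ Vm)).finrank_eq
    rw [h3, h4] at h2
    rw [show milnorDim F m = Module.finrank ℂ (Submodule.map T Vm) from rfl, h1]
    exact h2
  -- Step 4: the map φ
  let φ : (Ve × Ve × Ve) →ₗ[ℂ] S3 :=
    { toFun := fun p => (p.1 : S3) * s0 + (p.2.1 : S3) * s1 + (p.2.2 : S3) * s2
      map_add' := fun p q => by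
        simp only [Submodule.coe_add, Prod.fst_add, Prod.snd_add]
        ring
      map_smul' := fun c p => by
        simp only [Prod.smul_fst, Prod.smul_snd, Submodule.coe_smul, RingHom.id_apply,
          smul_add, smul_mul_assoc] }
  have hφ_apply : ∀ p : Ve × Ve × Ve,
      φ p = (p.1 : S3) * s0 + (p.2.1 : S3) * s1 + (p.2.2 : S3) * s2 := fun _ => rfl
  -- Step 5: range φ = W
  have hme : m = e + 2 * kk := by omega
  have hrange : LinearMap.range φ = W := by
    apply le_antisymm
    · rintro x ⟨⟨a, b, c⟩, rfl⟩
      rw [hφ_apply]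
      refine Submodule.mem_inf.2 ⟨?_, ?_⟩
      · show (a : S3) * s0 + (b : S3) * s1 + (c : S3) * s2 ∈ J
        refine Ideal.add_mem _ (Ideal.add_mem _ ?_ ?_) ?_ <;>
          exact Ideal.mul_mem_left _ _ (Ideal.subset_span (by simp [s0, s1, s2]))
      · show ((a : S3) * s0 + (b : S3) * s1 + (c : S3) * s2) ∈ Vm
        rw [mem_homogeneousSubmodule]
        have ha : (a : S3).IsHomogeneous e := (mem_homogeneousSubmodule _ _).1 a.2
        have hb : (b : S3).IsHomogeneous e := (mem_homogeneousSubmodule _ _).1 b.2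
        have hc : (c : S3).IsHomogeneous e := (mem_homogeneousSubmodule _ _).1 c.2
        exact ((homog_cast (ha.mul hhs0) hme.symm).add
          (homog_cast (hb.mul hhs1) hme.symm)).add (homog_cast (hc.mul hhs2) hme.symm)
    · intro x hx
      obtain ⟨hxJ, hxV⟩ := Submodule.mem_inf.1 hx
      have hxJ' : x ∈ Ideal.span {s0, s1, s2} := hxJ
      obtain ⟨q0, q1, q2, rfl⟩ := mem_span_triple hxJ'
      have hmem0 := homogeneousComponent_mem e q0
      have hmem1 := homogeneousComponent_mem e q1
      have hmem2 := homogeneousComponent_mem e q2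
      refine ⟨⟨⟨homogeneousComponent e q0, hmem0⟩, ⟨homogeneousComponent e q1, hmem1⟩,
        ⟨homogeneousComponent e q2, hmem2⟩⟩, ?_⟩
      rw [hφ_apply]
      have hx' : homogeneousComponent m (q0 * s0 + q1 * s1 + q2 * s2)
          = q0 * s0 + q1 * s1 + q2 * s2 := by
        rw [homogeneousComponent_of_mem hxV, if_pos rfl]
      calc (homogeneousComponent e q0 : S3) * s0 + homogeneousComponent e q1 * s1
            + homogeneousComponent e q2 * s2
          = homogeneousComponent m (q0 * s0) + homogeneousComponent m (q1 * s1)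
            + homogeneousComponent m (q2 * s2) := by
            rw [hme, hc_mul hhs0 e q0, hc_mul hhs1 e q1, hc_mul hhs2 e q2]
        _ = homogeneousComponent m (q0 * s0 + q1 * s1 + q2 * s2) := by rw [map_add, map_add]
        _ = q0 * s0 + q1 * s1 + q2 * s2 := hx'
  -- Step 6: rank-nullity for φ
  have hstep2 : Module.finrank ℂ W + Module.finrank ℂ (LinearMap.ker φ)
      = 3 * Module.finrank ℂ Ve := by
    have h2 := LinearMap.finrank_range_add_finrank_ker φ
    rw [hrange] at h2
    have h5 : Module.finrank ℂ (Ve × Ve × Ve) = 3 * Module.finrank ℂ Ve := by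
      rw [Module.finrank_prod, Module.finrank_prod]; ring
    omega
  -- Step 7: the map θ
  have het : e = t + kk := by omega
  have humem : ∀ (p q : Vt) (w1 w2 : S3), w1.IsHomogeneous kk → w2.IsHomogeneous kk →
      ((p : S3) * w1 + (q : S3) * w2) ∈ Ve := by
    intro p q w1 w2 h1 h2
    rw [mem_homogeneousSubmodule]
    have hp : (p : S3).IsHomogeneous t := (mem_homogeneousSubmodule _ _).1 p.2
    have hq : (q : S3).IsHomogeneous t := (mem_homogeneousSubmodule _ _).1 q.2
    exact (homog_cast (hp.mul h1) het.symm).add (homog_cast (hq.mul h2) het.symm)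
  let θ : (Vt × Vt) →ₗ[ℂ] (Ve × Ve × Ve) :=
    { toFun := fun pq =>
        (⟨(pq.1 : S3) * u0 + (pq.2 : S3) * v0, humem pq.1 pq.2 u0 v0 hhu0 hhv0⟩,
         ⟨(pq.1 : S3) * u1 + (pq.2 : S3) * v1, humem pq.1 pq.2 u1 v1 hhu1 hhv1⟩,
         ⟨(pq.1 : S3) * u2 + (pq.2 : S3) * v2, humem pq.1 pq.2 u2 v2 hhu2 hhv2⟩)
      map_add' := fun p q => by
        refine Prod.ext (Subtype.ext ?_) (Prod.ext (Subtype.ext ?_) (Subtype.ext ?_)) <;>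
          simp only [Submodule.coe_add, Prod.fst_add, Prod.snd_add] <;> ring
      map_smul' := fun c p => by
        refine Prod.ext (Subtype.ext ?_) (Prod.ext (Subtype.ext ?_) (Subtype.ext ?_)) <;>
          simp only [Prod.smul_fst, Prod.smul_snd, Submodule.coe_smul, RingHom.id_apply,
            smul_add, smul_mul_assoc] }
  have hC33 : u0 * v1 - u1 * v0 ≠ 0 :=
    C33_ne F s0 s1 s2 u0 u1 u2 v0 v1 v2 cS dS hcu.ne_zero hF0 hs2 heuler hu hv hdet
  -- Step 8: θ injective
  have hθ_apply : ∀ pq : Vt × Vt, θ pq =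
      (⟨(pq.1 : S3) * u0 + (pq.2 : S3) * v0, humem pq.1 pq.2 u0 v0 hhu0 hhv0⟩,
       ⟨(pq.1 : S3) * u1 + (pq.2 : S3) * v1, humem pq.1 pq.2 u1 v1 hhu1 hhv1⟩,
       ⟨(pq.1 : S3) * u2 + (pq.2 : S3) * v2, humem pq.1 pq.2 u2 v2 hhu2 hhv2⟩) := fun _ => rfl
  have hinj : Function.Injective θ := by
    rw [← LinearMap.ker_eq_bot, LinearMap.ker_eq_bot']
    intro pq hpq
    rw [hθ_apply] at hpq
    have h0 : (pq.1 : S3) * u0 + (pq.2 : S3) * v0 = 0 := by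
      have := congrArg (fun z : Ve × Ve × Ve => (z.1 : S3)) hpq
      simpa using this
    have h1 : (pq.1 : S3) * u1 + (pq.2 : S3) * v1 = 0 := by
      have := congrArg (fun z : Ve × Ve × Ve => (z.2.1 : S3)) hpq
      simpa using this
    have hp : (pq.1 : S3) = 0 := by
      have hpc : (pq.1 : S3) * (u0 * v1 - u1 * v0) = 0 := by
        linear_combination (norm := ring_nf) v1 * h0 - v0 * h1
      exact (mul_eq_zero.1 hpc).resolve_right hC33
    have hq : (pq.2 : S3) = 0 := by
      rw [hp, zero_mul, zero_add] at h0 h1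
      by_cases hv0 : v0 = 0
      · have hv1 : v1 ≠ 0 := by
          intro hv1
          exact hC33 (by rw [hv0, hv1, mul_zero, mul_zero, sub_zero])
        exact (mul_eq_zero.1 h1).resolve_right hv1
      · exact (mul_eq_zero.1 h0).resolve_right hv0
    exact Prod.ext (Subtype.ext hp) (Subtype.ext hq)
  -- Step 9: range θ = ker φ
  have hrangeθ : LinearMap.range θ = LinearMap.ker φ := by
    apply le_antisymm
    · rintro x ⟨⟨p, q⟩, rfl⟩
      rw [LinearMap.mem_ker, hθ_apply, hφ_apply]
      show ((p : S3) * u0 + (q : S3) * v0) * s0 + ((p : S3) * u1 + (q : S3) * v1) * s1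
        + ((p : S3) * u2 + (q : S3) * v2) * s2 = 0
      linear_combination (norm := ring_nf) (p : S3) * hu + (q : S3) * hv
    · rintro ⟨a, b, c⟩ hker
      rw [LinearMap.mem_ker, hφ_apply] at hker
      obtain ⟨A, B, hA, hB, hC⟩ := classify F s0 s1 s2 u0 u1 u2 v0 v1 v2 cS dS hcu hdS hF0 hs2
        heuler hu hv hdet hcop (a : S3) (b : S3) (c : S3) hker
      set P := homogeneousComponent t A with hP
      set Q := homogeneousComponent t B with hQ
      have key : ∀ (w : Ve) (w1 w2 : S3), w1.IsHomogeneous kk → w2.IsHomogeneous kk →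
          ((w : S3) = A * w1 + B * w2) → (w : S3) = P * w1 + Q * w2 := by
        intro w w1 w2 h1 h2 hw
        have hw' : homogeneousComponent e (w : S3) = (w : S3) := by
          rw [homogeneousComponent_of_mem w.2, if_pos rfl]
        conv_lhs => rw [← hw']
        rw [hw, map_add, het, hc_mul h1 t A, hc_mul h2 t B]
      refine ⟨(⟨P, homogeneousComponent_mem t A⟩, ⟨Q, homogeneousComponent_mem t B⟩), ?_⟩
      exact Prod.ext (Subtype.ext (key a u0 v0 hhu0 hhv0 hA).symm)
        (Prod.ext (Subtype.ext (key b u1 v1 hhu1 hhv1 hB).symm)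
          (Subtype.ext (key c u2 v2 hhu2 hhv2 hC).symm))
  -- Step 10
  have hstep3 : Module.finrank ℂ (LinearMap.ker φ) = 2 * Module.finrank ℂ Vt := by
    rw [← hrangeθ, LinearMap.finrank_range_of_inj hinj, Module.finrank_prod]
    ring
  have d1 := finrank_V m
  have d2 := finrank_V e
  have d3 := finrank_V t
  rw [show homogeneousSubmodule (Fin 3) ℂ m = Vm from rfl] at d1
  rw [show homogeneousSubmodule (Fin 3) ℂ e = Ve from rfl] at d2
  rw [show homogeneousSubmodule (Fin 3) ℂ t = Vt from rfl] at d3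
  omega




set_option maxHeartbeats 1000000 in
lemma pderiv_formulas (j : ℕ) :
    pderiv 0 ((X 1 ^ (j+1) * X 2 + X 0 ^ (j+2)) ^ 2 * X 1 - X 0 ^ (2*j+5) : S3)
      = ((2*j+4 : ℕ) : S3) * (X 0 ^ (j+1) * X 1 * (X 1 ^ (j+1) * X 2 + X 0 ^ (j+2)))
        - ((2*j+5 : ℕ) : S3) * X 0 ^ (2*j+4)
    ∧ pderiv 1 ((X 1 ^ (j+1) * X 2 + X 0 ^ (j+2)) ^ 2 * X 1 - X 0 ^ (2*j+5) : S3)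
      = (X 1 ^ (j+1) * X 2 + X 0 ^ (j+2)) *
          (((2*j+3 : ℕ) : S3) * (X 1 ^ (j+1) * X 2) + X 0 ^ (j+2))
    ∧ pderiv 2 ((X 1 ^ (j+1) * X 2 + X 0 ^ (j+2)) ^ 2 * X 1 - X 0 ^ (2*j+5) : S3)
      = ((2 : ℕ) : S3) * (X 1 ^ (j+2) * (X 1 ^ (j+1) * X 2 + X 0 ^ (j+2))) := by
  refine ⟨?_, ?_, ?_⟩ <;>
  · simp only [map_sub, map_add, Derivation.leibniz, Derivation.leibniz_pow, pderiv_X,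
      Pi.single_apply, smul_eq_mul, Fin.isValue,
      show ((0:Fin 3) = 0) = True by simp, show ((1:Fin 3) = 1) = True by simp,
      show ((2:Fin 3) = 2) = True by simp,
      show ((0:Fin 3) = 1) = False by simp [Fin.ext_iff],
      show ((0:Fin 3) = 2) = False by simp [Fin.ext_iff],
      show ((1:Fin 3) = 0) = False by simp [Fin.ext_iff],
      show ((1:Fin 3) = 2) = False by simp [Fin.ext_iff],
      show ((2:Fin 3) = 0) = False by simp [Fin.ext_iff],
      show ((2:Fin 3) = 1) = False by simp [Fin.ext_iff],
      if_true, if_false]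
    push_cast
    ring


-- abbreviations for this test
set_option maxHeartbeats 2000000 in
lemma identities (j : ℕ) :
    ∀ (s0 s1 s2 g u1 u2 v0 v1 v2 : S3),
    g = X 1 ^ (j+1) * X 2 + X 0 ^ (j+2) →
    s0 = ((2*j+4 : ℕ) : S3) * (X 0 ^ (j+1) * X 1 * g) - ((2*j+5 : ℕ) : S3) * X 0 ^ (2*j+4) →
    s1 = g * (((2*j+3 : ℕ) : S3) * (X 1 ^ (j+1) * X 2) + X 0 ^ (j+2)) →
    s2 = ((2 : ℕ) : S3) * (X 1 ^ (j+2) * g) →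
    u1 = -(((2 : ℕ) : S3) * X 1 ^ (j+2)) →
    u2 = X 0 ^ (j+2) + ((2*j+3 : ℕ) : S3) * (X 1 ^ (j+1) * X 2) →
    v0 = ((2 : ℕ) : S3) * g →
    v1 = ((4*j+10 : ℕ) : S3) * X 0 ^ (j+2) - ((4*j+8 : ℕ) : S3) * (X 0 ^ (j+1) * X 1)
        - ((2*(2*j+3)*(2*j+5) : ℕ) : S3) * (X 1 ^ (j+1) * X 2) →
    v2 = ((4*(j+1)*(j+2) : ℕ) : S3) * (X 0 ^ (j+1) * X 2)
        + (((2*j+3)*(2*j+3)*(2*j+5) : ℕ) : S3) * (X 1 ^ j * X 2 ^ 2) →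
    (X 0 * s0 + X 1 * s1 + X 2 * s2
        = ((2*j+5 : ℕ) : S3) * ((X 1 ^ (j+1) * X 2 + X 0 ^ (j+2)) ^ 2 * X 1 - X 0 ^ (2*j+5)))
    ∧ ((0:S3) * s0 + u1 * s1 + u2 * s2 = 0)
    ∧ (v0 * s0 + v1 * s1 + v2 * s2 = 0)
    ∧ ((0:S3) * (v1 * X 2 - v2 * X 1) - u1 * (v0 * X 2 - v2 * X 0)
        + u2 * (v0 * X 1 - v1 * X 0)
      = ((4*j+10 : ℕ) : S3) * ((X 1 ^ (j+1) * X 2 + X 0 ^ (j+2)) ^ 2 * X 1 - X 0 ^ (2*j+5))) := by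
  rintro s0 s1 s2 g u1 u2 v0 v1 v2 rfl rfl rfl rfl rfl rfl rfl rfl rfl
  refine ⟨?_, ?_, ?_, ?_⟩ <;>
  · push_cast
    ring


lemma prime_X0 : Prime (X 0 : S3) := by
  rw [← MulEquiv.prime_iff (finSuccEquiv ℂ 2).toMulEquiv]
  have h : (finSuccEquiv ℂ 2).toMulEquiv (X 0 : S3) = Polynomial.X := by
    simpa using finSuccEquiv_X_zero (R := ℂ) (n := 2)
  rw [h]
  exact Polynomial.prime_X

def pt011 : Fin 3 → ℂ := fun i => if i = 0 then 0 else 1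

lemma X0_not_dvd_X1 : ¬ (X 0 : S3) ∣ X 1 := by
  rintro ⟨q, hq⟩
  have h := congrArg (eval pt011) hq
  simp [pt011, eval_X] at h
lemma X0_not_dvd_g (j : ℕ) : ¬ (X 0 : S3) ∣ (X 1 ^ (j+1) * X 2 + X 0 ^ (j+2)) := by
  rintro ⟨q, hq⟩
  have h := congrArg (eval pt011) hq
  simp [pt011, eval_X, zero_pow] at h

lemma unit2 : IsUnit ((2 : ℕ) : S3) := by
  refine IsUnit.of_mul_eq_one (C (2 : ℂ)⁻¹) ?_
  rw [show ((2:ℕ) : S3) = C (2:ℂ) from by simpa using (map_natCast (C : ℂ →+* S3) 2).symm,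
    ← map_mul]
  norm_num

lemma F_ne_zero (j : ℕ) :
    ((X 1 ^ (j+1) * X 2 + X 0 ^ (j+2)) ^ 2 * X 1 - X 0 ^ (2*j+5) : S3) ≠ 0 := by
  intro h
  have h2 := congrArg (eval (fun _ : Fin 3 => (1:ℂ))) h
  simp [eval_X] at h2
  norm_num at h2

lemma s2_ne_zero (j : ℕ) :
    (((2 : ℕ) : S3) * (X 1 ^ (j+2) * (X 1 ^ (j+1) * X 2 + X 0 ^ (j+2))) : S3) ≠ 0 := by
  intro h
  have h2 := congrArg (eval (fun _ : Fin 3 => (1:ℂ))) h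
  simp [eval_X] at h2

set_option maxHeartbeats 800000 in
lemma cop (j : ℕ) : ∀ A : S3,
    ((X 1 ^ (j+1) * X 2 + X 0 ^ (j+2)) ^ 2 * X 1 - X 0 ^ (2*j+5) : S3)
      ∣ A * (((2 : ℕ) : S3) * (X 1 ^ (j+2) * (X 1 ^ (j+1) * X 2 + X 0 ^ (j+2))))
    → ((X 1 ^ (j+1) * X 2 + X 0 ^ (j+2)) ^ 2 * X 1 - X 0 ^ (2*j+5) : S3) ∣ A := by
  set g : S3 := X 1 ^ (j+1) * X 2 + X 0 ^ (j+2) with hg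
  set F : S3 := g ^ 2 * X 1 - X 0 ^ (2*j+5) with hF
  have hrel : IsRelPrime F (((2 : ℕ) : S3) * (X 1 ^ (j+2) * g)) := by
    intro w hwF hws2
    by_contra hw
    have hw0 : w ≠ 0 := by
      rintro rfl
      exact F_ne_zero j (zero_dvd_iff.1 hwF)
    obtain ⟨p, hpirr, hpw⟩ := WfDvdMonoid.exists_irreducible_factor hw hw0
    have hp : Prime p := UniqueFactorizationMonoid.irreducible_iff_prime.1 hpirr
    have hpF : p ∣ F := hpw.trans hwF
    have hps2 : p ∣ ((2 : ℕ) : S3) * (X 1 ^ (j+2) * g) := hpw.trans hws2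
    -- p divides X 0
    have hpX0 : p ∣ X 0 := by
      have hpyg : p ∣ X 1 ^ (j+2) * g := by
        rcases hp.2.2 _ _ hps2 with h2 | h2
        · exact absurd (isUnit_of_dvd_unit h2 unit2) hp.not_unit
        · exact h2
      have hpX0pow : p ∣ X 0 ^ (2*j+5) := by
        have hgy : p ∣ g ^ 2 * X 1 := by
          rcases hp.2.2 _ _ hpyg with h2 | h2
          · exact Dvd.dvd.mul_left (hp.dvd_of_dvd_pow h2) _
          · exact Dvd.dvd.mul_right (dvd_pow h2 two_ne_zero) _
        have : g ^ 2 * X 1 - F = X 0 ^ (2*j+5) := by rw [hF]; ring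
        exact this ▸ dvd_sub hgy hpF
      exact hp.dvd_of_dvd_pow hpX0pow
    -- hence X 0 ∣ p
    have hX0p : (X 0 : S3) ∣ p := by
      obtain ⟨q, hq⟩ := hpX0
      rcases (prime_X0.irreducible.isUnit_or_isUnit hq).resolve_left hp.not_unit with hq'
      obtain ⟨uu, rfl⟩ := hq'
      exact ⟨(uu⁻¹ : S3ˣ), by rw [hq]; simp [mul_assoc]⟩
    -- now derive contradiction
    have hpyg : p ∣ X 1 ^ (j+2) * g := by
      rcases hp.2.2 _ _ hps2 with h2 | h2
      · exact absurd (isUnit_of_dvd_unit h2 unit2) hp.not_unit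
      · exact h2
    rcases hp.2.2 _ _ hpyg with h2 | h2
    · exact X0_not_dvd_X1 (hX0p.trans (hp.dvd_of_dvd_pow h2))
    · exact X0_not_dvd_g j (hX0p.trans h2)
  intro A hdvd
  exact hrel.dvd_of_dvd_mul_right hdvd

lemma unit_natCast (n : ℕ) (hn : n ≠ 0) : IsUnit ((n : ℕ) : S3) := by
  refine IsUnit.of_mul_eq_one (C ((n : ℂ))⁻¹) ?_
  rw [show ((n:ℕ) : S3) = C ((n:ℕ):ℂ) from (map_natCast (C : ℂ →+* S3) n).symm, ← map_mul,
    mul_inv_cancel₀ (by exact_mod_cast hn), map_one]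

lemma hnat (n : ℕ) : (((n : ℕ) : S3)).IsHomogeneous 0 := by
  rw [show ((n:ℕ) : S3) = C ((n:ℕ):ℂ) from (map_natCast (C : ℂ →+* S3) n).symm]
  exact isHomogeneous_C _ _

lemma homog_g (j : ℕ) : (X 1 ^ (j+1) * X 2 + X 0 ^ (j+2) : S3).IsHomogeneous (j+2) := by
  have h1 : (X 1 ^ (j+1) * X 2 : S3).IsHomogeneous (j+2) :=
    homog_cast ((isHomogeneous_X_pow _ _).mul (isHomogeneous_X ℂ 2)) (by omega)
  exact h1.add (isHomogeneous_X_pow _ _)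

lemma homog_s0 (j : ℕ) :
    (((2*j+4 : ℕ) : S3) * (X 0 ^ (j+1) * X 1 * (X 1 ^ (j+1) * X 2 + X 0 ^ (j+2)))
      - ((2*j+5 : ℕ) : S3) * X 0 ^ (2*j+4)).IsHomogeneous (2*(j+2)) := by
  have t1 := (hnat (2*j+4)).mul (((isHomogeneous_X_pow (0 : Fin 3) (j+1)).mul
    (isHomogeneous_X ℂ 1)).mul (homog_g j))
  have t2 := (hnat (2*j+5)).mul (isHomogeneous_X_pow (0 : Fin 3) (2*j+4))
  exact (homog_cast t1 (by omega)).sub (homog_cast t2 (by omega))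

lemma homog_s1 (j : ℕ) :
    ((X 1 ^ (j+1) * X 2 + X 0 ^ (j+2) : S3) *
      (((2*j+3 : ℕ) : S3) * (X 1 ^ (j+1) * X 2) + X 0 ^ (j+2))).IsHomogeneous (2*(j+2)) := by
  have hin : ((((2*j+3 : ℕ) : S3)) * (X 1 ^ (j+1) * X 2) + X 0 ^ (j+2)
      : S3).IsHomogeneous (j+2) := by
    have t1 := (hnat (2*j+3)).mul ((isHomogeneous_X_pow (1 : Fin 3) (j+1)).mul
      (isHomogeneous_X ℂ 2))
    exact (homog_cast t1 (by omega)).add (isHomogeneous_X_pow _ _)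
  exact homog_cast ((homog_g j).mul hin) (by omega)

lemma homog_s2 (j : ℕ) :
    (((2 : ℕ) : S3) * (X 1 ^ (j+2) * (X 1 ^ (j+1) * X 2 + X 0 ^ (j+2)))).IsHomogeneous
      (2*(j+2)) := by
  have t1 := (hnat 2).mul ((isHomogeneous_X_pow (1 : Fin 3) (j+2)).mul (homog_g j))
  exact homog_cast t1 (by omega)

lemma homog_u1 (j : ℕ) : (-(((2 : ℕ) : S3) * X 1 ^ (j+2))).IsHomogeneous (j+2) := by
  have t1 := (hnat 2).mul (isHomogeneous_X_pow (1 : Fin 3) (j+2))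
  exact (homog_cast t1 (by omega)).neg

lemma homog_u2 (j : ℕ) :
    ((X 0 ^ (j+2) : S3) + ((2*j+3 : ℕ) : S3) * (X 1 ^ (j+1) * X 2)).IsHomogeneous (j+2) := by
  have t1 := (hnat (2*j+3)).mul ((isHomogeneous_X_pow (1 : Fin 3) (j+1)).mul
    (isHomogeneous_X ℂ 2))
  exact (isHomogeneous_X_pow _ _).add (homog_cast t1 (by omega))

lemma homog_v0 (j : ℕ) :
    (((2 : ℕ) : S3) * (X 1 ^ (j+1) * X 2 + X 0 ^ (j+2))).IsHomogeneous (j+2) :=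
  homog_cast ((hnat 2).mul (homog_g j)) (by omega)

lemma homog_v1 (j : ℕ) :
    (((4*j+10 : ℕ) : S3) * X 0 ^ (j+2) - ((4*j+8 : ℕ) : S3) * (X 0 ^ (j+1) * X 1)
      - ((2*(2*j+3)*(2*j+5) : ℕ) : S3) * (X 1 ^ (j+1) * X 2)).IsHomogeneous (j+2) := by
  have t1 := (hnat (4*j+10)).mul (isHomogeneous_X_pow (0 : Fin 3) (j+2))
  have t2 := (hnat (4*j+8)).mul ((isHomogeneous_X_pow (0 : Fin 3) (j+1)).mul
    (isHomogeneous_X ℂ 1))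
  have t3 := (hnat (2*(2*j+3)*(2*j+5))).mul ((isHomogeneous_X_pow (1 : Fin 3) (j+1)).mul
    (isHomogeneous_X ℂ 2))
  exact ((homog_cast t1 (by omega)).sub (homog_cast t2 (by omega))).sub
    (homog_cast t3 (by omega))

lemma homog_v2 (j : ℕ) :
    (((4*(j+1)*(j+2) : ℕ) : S3) * (X 0 ^ (j+1) * X 2)
      + (((2*j+3)*(2*j+3)*(2*j+5) : ℕ) : S3) * (X 1 ^ j * X 2 ^ 2)).IsHomogeneous (j+2) := by
  have t1 := (hnat (4*(j+1)*(j+2))).mul ((isHomogeneous_X_pow (0 : Fin 3) (j+1)).mul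
    (isHomogeneous_X ℂ 2))
  have t2 := (hnat ((2*j+3)*(2*j+3)*(2*j+5))).mul ((isHomogeneous_X_pow (1 : Fin 3) j).mul
    (isHomogeneous_X_pow (2 : Fin 3) 2))
  exact (homog_cast t1 (by omega)).add (homog_cast t2 (by omega))

end Stmt15Aux

theorem stmt15 (k : ℕ) (hk : 2 ≤ k) :
    ∃ N : ℕ, ∀ m ≥ N,
      milnorDim ((X 1 ^ (k - 1) * X 2 + X 0 ^ k) ^ 2 * X 1 - X 0 ^ (2 * k + 1) : S3) m
        = 3 * k ^ 2 := by
  obtain ⟨j, rfl⟩ : ∃ j, k = j + 2 := ⟨k - 2, by omega⟩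
  rw [show j + 2 - 1 = j + 1 by omega, show 2 * (j + 2) + 1 = 2*j+5 by omega]
  refine ⟨3*(j+2), fun m hm => ?_⟩
  obtain ⟨t, rfl⟩ : ∃ t, m = 3*(j+2) + t := ⟨m - 3*(j+2), by omega⟩
  obtain ⟨hs0, hs1, hs2⟩ := Stmt15Aux.pderiv_formulas j
  obtain ⟨heuler0, hu0, hv0, hdet0⟩ := Stmt15Aux.identities j _ _ _ _ _ _ _ _ _
    rfl rfl rfl rfl rfl rfl rfl rfl rfl
  have hmaster := Stmt15Aux.master
    ((X 1 ^ (j+1) * X 2 + X 0 ^ (j+2)) ^ 2 * X 1 - X 0 ^ (2*j+5) : S3) (j+2) t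
    (0 : S3)
    (-(((2 : ℕ) : S3) * X 1 ^ (j+2)))
    ((X 0 ^ (j+2) : S3) + ((2*j+3 : ℕ) : S3) * (X 1 ^ (j+1) * X 2))
    (((2 : ℕ) : S3) * (X 1 ^ (j+1) * X 2 + X 0 ^ (j+2)))
    (((4*j+10 : ℕ) : S3) * X 0 ^ (j+2) - ((4*j+8 : ℕ) : S3) * (X 0 ^ (j+1) * X 1)
      - ((2*(2*j+3)*(2*j+5) : ℕ) : S3) * (X 1 ^ (j+1) * X 2))
    (((4*(j+1)*(j+2) : ℕ) : S3) * (X 0 ^ (j+1) * X 2)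
      + (((2*j+3)*(2*j+3)*(2*j+5) : ℕ) : S3) * (X 1 ^ j * X 2 ^ 2))
    ((4*j+10 : ℕ) : S3) ((2*j+5 : ℕ) : S3)
    (Stmt15Aux.unit_natCast _ (by omega))
    ((Stmt15Aux.unit_natCast (2*j+5) (by omega)).ne_zero)
    (Stmt15Aux.F_ne_zero j)
    (by rw [hs2]; exact Stmt15Aux.s2_ne_zero j)
    (by rw [hs0]; exact Stmt15Aux.homog_s0 j)
    (by rw [hs1]; exact Stmt15Aux.homog_s1 j)
    (by rw [hs2]; exact Stmt15Aux.homog_s2 j)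
    (isHomogeneous_zero _ _ _)
    (Stmt15Aux.homog_u1 j) (Stmt15Aux.homog_u2 j)
    (Stmt15Aux.homog_v0 j) (Stmt15Aux.homog_v1 j) (Stmt15Aux.homog_v2 j)
    (by rw [hs0, hs1, hs2]; exact heuler0)
    (by rw [hs0, hs1, hs2]; exact hu0)
    (by rw [hs0, hs1, hs2]; exact hv0)
    hdet0
    (by rw [hs2]; exact Stmt15Aux.cop j)
  -- final arithmetic
  set M := milnorDim ((X 1 ^ (j+1) * X 2 + X 0 ^ (j+2)) ^ 2 * X 1 - X 0 ^ (2*j+5) : S3)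
    (3*(j+2)+t) with hM
  have e1 : (M : ℤ) + 3 * (((j+2) + t + 2).choose 2 : ℤ)
      = ((3*(j+2) + t + 2).choose 2 : ℤ) + 2 * ((t + 2).choose 2 : ℤ) := by
    exact_mod_cast hmaster
  have e2 : 2 * (((j+2) + t + 2).choose 2 : ℤ) = ((j:ℤ)+t+3) * ((j:ℤ)+t+4) := by
    have := Stmt15Aux.two_mul_choose ((j+2)+t)
    push_cast [this]
    push_cast at this ⊢
    linarith [this]
  have e3 : 2 * ((3*(j+2) + t + 2).choose 2 : ℤ) = (3*(j:ℤ)+t+7) * (3*(j:ℤ)+t+8) := by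
    have := Stmt15Aux.two_mul_choose (3*(j+2)+t)
    push_cast at this ⊢
    linarith [this]
  have e4 : 2 * ((t + 2).choose 2 : ℤ) = ((t:ℤ)+1) * ((t:ℤ)+2) := by
    have := Stmt15Aux.two_mul_choose t
    push_cast at this ⊢
    linarith [this]
  have h2M : 2 * (M : ℤ) = 6 * ((j:ℤ)+2)^2 := by
    linear_combination 2*e1 - 3*e2 + e3 + 2*e4
  have hMZ : (M : ℤ) = 3 * ((j:ℤ)+2)^2 := by linarith
  exact_mod_cast hMZ


end
end

section
/- Let k ≥ 2 be an integer and f = (y^{k−1}z + x^k)²·y − x^{2k+1} ∈ ℂ[x,y,z]. Then the triples ρ_1 = (2x^k + 2y^{k−1}z, (4k+2)x^k − 4k·x^{k−1}y − (8k²−2)y^{k−1}z, 4k(k−1)x^{k−1}z + (8k³−4k²−2k+1)y^{k−2}z²) and ρ_2 = (0, −2y^k, x^k + (2k−1)y^{k−1}z) both satisfy a·f_x + b·f_y + c·f_z = 0 (so ρ_1, ρ_2 ∈ AR(f)_k), and ρ_1 and ρ_2 are linearly independent over S. -/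
open MvPolynomial

noncomputable section

theorem stmt16 (k : ℕ) (hk : 2 ≤ k)
    (f : S3) (hf : f = (X 1 ^ (k - 1) * X 2 + X 0 ^ k) ^ 2 * X 1 - X 0 ^ (2 * k + 1))
    (ρ₁ ρ₂ : Fin 3 → S3)
    (h₁ : ρ₁ = ![C 2 * X 0 ^ k + C 2 * X 1 ^ (k - 1) * X 2,
      C (4 * (k : ℂ) + 2) * X 0 ^ k - C (4 * (k : ℂ)) * X 0 ^ (k - 1) * X 1
        - C (8 * (k : ℂ) ^ 2 - 2) * X 1 ^ (k - 1) * X 2,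
      C (4 * (k : ℂ) * ((k : ℂ) - 1)) * X 0 ^ (k - 1) * X 2
        + C (8 * (k : ℂ) ^ 3 - 4 * (k : ℂ) ^ 2 - 2 * (k : ℂ) + 1) * X 1 ^ (k - 2) * X 2 ^ 2])
    (h₂ : ρ₂ = ![0, C (-2 : ℂ) * X 1 ^ k,
      X 0 ^ k + C (2 * (k : ℂ) - 1) * X 1 ^ (k - 1) * X 2]) :
    (∑ i, ρ₁ i * pderiv i f = 0) ∧ (∑ i, ρ₂ i * pderiv i f = 0) ∧
      LinearIndependent S3 ![ρ₁, ρ₂] := by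
  obtain ⟨m, rfl⟩ : ∃ m, k = m + 2 := ⟨k - 2, by omega⟩
  have hX0 : (C 2 * X 0 ^ (m + 2) + C 2 * X 1 ^ (m + 2 - 1) * X 2 : S3) ≠ 0 := by
    intro h
    have := congrArg (eval ![1, 0, 0]) h
    simp at this
  have hX1 : (C (-2 : ℂ) * X 1 ^ (m + 2) : S3) ≠ 0 := by
    intro h
    have := congrArg (eval ![0, 1, 0]) h
    simp at this
  refine ⟨?_, ?_, ?_⟩
  · subst hf h₁
    simp only [Fin.sum_univ_three, Matrix.cons_val_zero, Matrix.cons_val_one, Matrix.head_cons,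
      Matrix.cons_val_two, Matrix.tail_cons]
    simp only [show m + 2 - 1 = m + 1 from rfl, show m + 2 - 2 = m from rfl]
    simp only [map_sub, map_add, pderiv_mul, Derivation.leibniz_pow, pderiv_X_self,
      pderiv_X_of_ne (by decide : (1:Fin 3) ≠ 0), pderiv_X_of_ne (by decide : (2:Fin 3) ≠ 0),
      pderiv_X_of_ne (by decide : (0:Fin 3) ≠ 1), pderiv_X_of_ne (by decide : (2:Fin 3) ≠ 1),
      pderiv_X_of_ne (by decide : (0:Fin 3) ≠ 2), pderiv_X_of_ne (by decide : (1:Fin 3) ≠ 2),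
      nsmul_eq_mul, smul_eq_mul]
    simp only [C_add, C_mul, C_sub, C_neg, C_pow, C_1, C_0, map_ofNat, C_eq_coe_nat]
    push_cast
    ring
  · subst hf h₂
    simp only [Fin.sum_univ_three, Matrix.cons_val_zero, Matrix.cons_val_one, Matrix.head_cons,
      Matrix.cons_val_two, Matrix.tail_cons]
    simp only [show m + 2 - 1 = m + 1 from rfl]
    simp only [map_sub, map_add, pderiv_mul, Derivation.leibniz_pow, pderiv_X_self,
      pderiv_X_of_ne (by decide : (1:Fin 3) ≠ 0), pderiv_X_of_ne (by decide : (2:Fin 3) ≠ 0),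
      pderiv_X_of_ne (by decide : (0:Fin 3) ≠ 1), pderiv_X_of_ne (by decide : (2:Fin 3) ≠ 1),
      pderiv_X_of_ne (by decide : (0:Fin 3) ≠ 2), pderiv_X_of_ne (by decide : (1:Fin 3) ≠ 2),
      nsmul_eq_mul, smul_eq_mul]
    simp only [C_add, C_mul, C_sub, C_neg, C_pow, C_1, C_0, map_ofNat, C_eq_coe_nat]
    push_cast
    ring
  · rw [Fintype.linearIndependent_iff]
    intro g hg
    have h0 := congrFun hg 0
    have h1 := congrFun hg 1
    simp only [Fin.sum_univ_two, Matrix.cons_val_zero, Matrix.cons_val_one, Matrix.head_cons,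
      Pi.add_apply, Pi.smul_apply, smul_eq_mul, Pi.zero_apply, h₁, h₂] at h0 h1
    rw [mul_zero, add_zero] at h0
    have hg0 : g 0 = 0 := by
      rcases mul_eq_zero.1 h0 with h | h
      · exact h
      · exact absurd h hX0
    rw [hg0, zero_mul, zero_add] at h1
    have hg1 : g 1 = 0 := by
      rcases mul_eq_zero.1 h1 with h | h
      · exact h
      · exact absurd h hX1
    intro i
    fin_cases i
    · exact hg0
    · exact hg1


end
end

section
/- For every integer k ≥ 2, the homogeneous polynomial (y^{k−1}z + x^k)²·y − x^{2k+1} of degree 2k+1 is irreducible in ℂ[x,y,z]. -/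
open MvPolynomial

noncomputable section

/-! ### Auxiliary material for `stmt17` -/

/-- The polynomial ring in two variables. -/
abbrev R2' : Type := MvPolynomial (Fin 2) ℂ

/-- Swap-then-peel equivalence sending `X 1` to `Polynomial.X`. -/
def e2' : R2' ≃ₐ[ℂ] Polynomial (MvPolynomial (Fin 1) ℂ) :=
  (renameEquiv ℂ (Equiv.swap 0 1)).trans (MvPolynomial.finSuccEquiv ℂ 1)

/-- Peel-off equivalence sending `X 0` to `Polynomial.X`. -/
def e1' : R2' ≃ₐ[ℂ] Polynomial (MvPolynomial (Fin 1) ℂ) :=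
  MvPolynomial.finSuccEquiv ℂ 1

lemma e2'_X1 : e2' (X 1) = Polynomial.X := by
  show (MvPolynomial.finSuccEquiv ℂ 1) (rename (Equiv.swap 0 1) (X 1)) = _
  rw [rename_X]
  have h : Equiv.swap (0 : Fin 2) 1 1 = 0 := by decide
  rw [h, finSuccEquiv_X_zero]

lemma e1'_X0 : e1' (X 0) = Polynomial.X := by
  show (MvPolynomial.finSuccEquiv ℂ 1) (X 0) = _
  rw [finSuccEquiv_X_zero]

lemma e1'_X1 : e1' (X 1) = Polynomial.C (X 0) := by
  show (MvPolynomial.finSuccEquiv ℂ 1) (X 1) = _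
  have h : (1 : Fin 2) = Fin.succ 0 := rfl
  rw [h, finSuccEquiv_X_succ]

lemma prime_Y' : Prime (X 1 : R2') := by
  rw [← MulEquiv.prime_iff e2'.toMulEquiv]
  show Prime (e2' (X 1))
  rw [e2'_X1]
  exact Polynomial.prime_X

lemma not_Y_dvd_X' : ¬ ((X 1 : R2') ∣ X 0) := by
  rintro ⟨t, ht⟩
  have h := congrArg (MvPolynomial.eval (fun i : Fin 2 => if i = 0 then (1 : ℂ) else 0)) ht
  simp at h

lemma unit_of_dvd' (j : ℕ) (r : R2') (h1 : r ∣ (X 1 : R2') ^ (2 * j + 3))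
    (h2 : r ∣ (X 0 : R2') ^ (2 * j + 4) * X 1 - (X 0) ^ (2 * j + 5)) : IsUnit r := by
  by_contra hr
  have hr0 : r ≠ 0 := by
    rintro rfl
    rw [zero_dvd_iff] at h1
    exact pow_ne_zero _ (X_ne_zero (1 : Fin 2)) h1
  obtain ⟨i, hi, hir⟩ := WfDvdMonoid.exists_irreducible_factor hr hr0
  have hip : Prime i := UniqueFactorizationMonoid.irreducible_iff_prime.mp hi
  have hiy : i ∣ (X 1 : R2') := hip.dvd_of_dvd_pow (hir.trans h1)
  obtain ⟨t, ht⟩ := hiy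
  rcases prime_Y'.irreducible.isUnit_or_isUnit ht with hu | hu
  · exact hip.not_unit hu
  · obtain ⟨v, hv⟩ := hu.exists_right_inv
    have hyi : (X 1 : R2') ∣ i := ⟨v, by rw [ht, mul_assoc, hv, mul_one]⟩
    have hyd : (X 1 : R2') ∣ (X 0 : R2') ^ (2 * j + 4) * X 1 - (X 0) ^ (2 * j + 5) :=
      hyi.trans (hir.trans h2)
    have hy5 : (X 1 : R2') ∣ (X 0 : R2') ^ (2 * j + 5) := by
      have hsub := dvd_sub (dvd_mul_left (X 1 : R2') ((X 0) ^ (2 * j + 4))) hyd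
      have hring : (X 0 : R2') ^ (2 * j + 4) * X 1
          - ((X 0 : R2') ^ (2 * j + 4) * X 1 - (X 0) ^ (2 * j + 5)) = (X 0) ^ (2 * j + 5) := by
        ring
      rwa [hring] at hsub
    exact not_Y_dvd_X' (prime_Y'.dvd_of_dvd_pow hy5)

lemma no_sqrt' (j : ℕ) (u : R2') :
    u ^ 2 ≠ 4 * (X 0 : R2') ^ (2 * j + 5) * (X 1) ^ (2 * j + 3) := by
  intro h
  have h' := congrArg e1' h
  rw [map_pow, map_mul, map_mul, map_pow, map_pow, e1'_X0, e1'_X1, map_ofNat] at h'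
  have hre : (4 : Polynomial (MvPolynomial (Fin 1) ℂ)) * Polynomial.X ^ (2 * j + 5)
      * (Polynomial.C (X 0 : MvPolynomial (Fin 1) ℂ)) ^ (2 * j + 3)
      = Polynomial.C (4 * (X 0 : MvPolynomial (Fin 1) ℂ) ^ (2 * j + 3))
        * Polynomial.X ^ (2 * j + 5) := by
    rw [map_mul, map_pow, map_ofNat]
    ring
  rw [hre] at h'
  have hc0 : (4 * (X 0 : MvPolynomial (Fin 1) ℂ) ^ (2 * j + 3)) ≠ 0 := by
    apply mul_ne_zero
    · norm_num
    · exact pow_ne_zero _ (X_ne_zero _)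
  have hdeg := congrArg Polynomial.natDegree h'
  rw [Polynomial.natDegree_pow, Polynomial.natDegree_C_mul_X_pow _ _ hc0] at hdeg
  omega

lemma coeffs_eq' {R : Type*} [CommRing R] {A B c a b a' b' : R}
    (h : Polynomial.C A * Polynomial.X ^ 2 + Polynomial.C B * Polynomial.X + Polynomial.C c
      = (Polynomial.C a * Polynomial.X + Polynomial.C b)
        * (Polynomial.C a' * Polynomial.X + Polynomial.C b')) :
    A = a * a' ∧ B = a * b' + b * a' ∧ c = b * b' := by
  have hexp : (Polynomial.C a * Polynomial.X + Polynomial.C b)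
      * (Polynomial.C a' * Polynomial.X + Polynomial.C b')
      = Polynomial.C (a * a') * Polynomial.X ^ 2 + Polynomial.C (a * b' + b * a') * Polynomial.X
        + Polynomial.C (b * b') := by
    simp only [map_mul, map_add]
    ring
  rw [hexp] at h
  refine ⟨?_, ?_, ?_⟩
  · have := congrArg (fun p => Polynomial.coeff p 2) h
    simpa [Polynomial.coeff_add, Polynomial.coeff_C_mul, Polynomial.coeff_X_pow,
      Polynomial.coeff_C, mul_assoc] using this
  · have := congrArg (fun p => Polynomial.coeff p 1) h
    simpa [Polynomial.coeff_add, Polynomial.coeff_C_mul, Polynomial.coeff_X_pow,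
      Polynomial.coeff_C, mul_assoc] using this
  · have := congrArg (fun p => Polynomial.coeff p 0) h
    simpa [Polynomial.coeff_add, Polynomial.coeff_C_mul, Polynomial.coeff_X_pow,
      Polynomial.coeff_C, mul_assoc] using this

lemma key_irred' (j : ℕ) :
    Irreducible (Polynomial.C ((X 1 : R2') ^ (2 * j + 3)) * Polynomial.X ^ 2
      + Polynomial.C (2 * (X 0 : R2') ^ (j + 2) * (X 1) ^ (j + 2)) * Polynomial.X
      + Polynomial.C ((X 0 : R2') ^ (2 * j + 4) * X 1 - (X 0) ^ (2 * j + 5))) := by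
  have hA : ((X 1 : R2') ^ (2 * j + 3)) ≠ 0 := pow_ne_zero _ (X_ne_zero _)
  set A := ((X 1 : R2') ^ (2 * j + 3)) with hAdef
  set B := (2 * (X 0 : R2') ^ (j + 2) * (X 1) ^ (j + 2)) with hBdef
  set c := ((X 0 : R2') ^ (2 * j + 4) * X 1 - (X 0) ^ (2 * j + 5)) with hcdef
  set q := Polynomial.C A * Polynomial.X ^ 2 + Polynomial.C B * Polynomial.X + Polynomial.C c
    with hqdef
  have hqdeg : q.natDegree = 2 := Polynomial.natDegree_quadratic hA
  have hq0 : q ≠ 0 := fun h0 => by rw [h0] at hqdeg; simp at hqdeg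
  constructor
  · intro hu
    have := Polynomial.natDegree_eq_zero_of_isUnit hu
    omega
  · intro g h hgh
    by_contra hc'
    push_neg at hc'
    obtain ⟨hg, hh⟩ := hc'
    have hg0 : g ≠ 0 := fun h0 => hq0 (by rw [hgh, h0, zero_mul])
    have hh0 : h ≠ 0 := fun h0 => hq0 (by rw [hgh, h0, mul_zero])
    have hdeg : g.natDegree + h.natDegree = 2 := by
      rw [← Polynomial.natDegree_mul hg0 hh0, ← hgh, hqdeg]
    -- helper: a degree-zero factor must be a unit
    have hconst : ∀ p : Polynomial R2', p ∣ q → p.natDegree = 0 → IsUnit p := by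
      intro p hpq hp0
      obtain ⟨r, hr⟩ := Polynomial.natDegree_eq_zero.mp hp0
      rw [← hr] at hpq ⊢
      rw [Polynomial.isUnit_C]
      have hco := (Polynomial.C_dvd_iff_dvd_coeff r q).mp hpq
      have h2 := hco 2
      have h0' := hco 0
      have hc2 : q.coeff 2 = A := by
        simp [hqdef, Polynomial.coeff_add, Polynomial.coeff_C_mul, Polynomial.coeff_X_pow,
          Polynomial.coeff_C]
      have hc0 : q.coeff 0 = c := by
        simp [hqdef, Polynomial.coeff_add, Polynomial.coeff_C_mul, Polynomial.coeff_X_pow,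
          Polynomial.coeff_C]
      rw [hc2] at h2
      rw [hc0] at h0'
      exact unit_of_dvd' j r h2 h0'
    rcases Nat.lt_or_ge g.natDegree 1 with hg1 | hg1
    · exact hg (hconst g ⟨h, hgh⟩ (by omega))
    rcases Nat.lt_or_ge h.natDegree 1 with hh1 | hh1
    · exact hh (hconst h ⟨g, by rw [hgh, mul_comm]⟩ (by omega))
    have hgd : g.natDegree = 1 := by omega
    have hhd : h.natDegree = 1 := by omega
    have hgrep := Polynomial.eq_X_add_C_of_natDegree_le_one (p := g) (by omega)
    have hhrep := Polynomial.eq_X_add_C_of_natDegree_le_one (p := h) (by omega)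
    set a := g.coeff 1
    set b := g.coeff 0
    set a' := h.coeff 1
    set b' := h.coeff 0
    have heq : Polynomial.C A * Polynomial.X ^ 2 + Polynomial.C B * Polynomial.X + Polynomial.C c
        = (Polynomial.C a * Polynomial.X + Polynomial.C b)
          * (Polynomial.C a' * Polynomial.X + Polynomial.C b') := by
      rw [← hgrep, ← hhrep, ← hgh]
    obtain ⟨e2, e1, e0⟩ := coeffs_eq' heq
    have hu2 : (a * b' - b * a') ^ 2
        = 4 * (X 0 : R2') ^ (2 * j + 5) * (X 1) ^ (2 * j + 3) := by
      have hid : (a * b' - b * a') ^ 2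
          = (a * b' + b * a') ^ 2 - 4 * (a * a') * (b * b') := by ring
      rw [hid, ← e2, ← e1, ← e0, hAdef, hBdef, hcdef]
      ring
    exact no_sqrt' j (a * b' - b * a') hu2

/-- The change of variables sending `x ↦ C x`, `y ↦ C y`, `z ↦ Polynomial.X`. -/
def Phi' : S3 ≃ₐ[ℂ] Polynomial R2' :=
  (renameEquiv ℂ (finRotate 3)).trans (MvPolynomial.finSuccEquiv ℂ 2)

lemma Phi'_X0 : Phi' (X 0) = Polynomial.C (X 0) := by
  show (MvPolynomial.finSuccEquiv ℂ 2) (rename (finRotate 3) (X 0)) = _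
  rw [rename_X]
  have h : finRotate 3 (0 : Fin 3) = Fin.succ 0 := by decide
  rw [h, finSuccEquiv_X_succ]

lemma Phi'_X1 : Phi' (X 1) = Polynomial.C (X 1) := by
  show (MvPolynomial.finSuccEquiv ℂ 2) (rename (finRotate 3) (X 1)) = _
  rw [rename_X]
  have h : finRotate 3 (1 : Fin 3) = Fin.succ 1 := by decide
  rw [h, finSuccEquiv_X_succ]

lemma Phi'_X2 : Phi' (X 2) = Polynomial.X := by
  show (MvPolynomial.finSuccEquiv ℂ 2) (rename (finRotate 3) (X 2)) = _
  rw [rename_X]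
  have h : finRotate 3 (2 : Fin 3) = 0 := by decide
  rw [h, finSuccEquiv_X_zero]

theorem stmt17 (k : ℕ) (hk : 2 ≤ k) :
    Irreducible ((X 1 ^ (k - 1) * X 2 + X 0 ^ k) ^ 2 * X 1 - X 0 ^ (2 * k + 1) : S3) := by
  obtain ⟨j, rfl⟩ : ∃ j, k = j + 2 := ⟨k - 2, by omega⟩
  rw [show (j + 2) - 1 = j + 1 from rfl, show 2 * (j + 2) + 1 = 2 * j + 5 by ring]
  refine (MulEquiv.irreducible_iff Phi').mp ?_
  simp only [map_sub, map_mul, map_pow, map_add, Phi'_X0, Phi'_X1, Phi'_X2]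
  have heq : ((Polynomial.C (X 1 : R2')) ^ (j + 1) * Polynomial.X
        + (Polynomial.C (X 0 : R2')) ^ (j + 2)) ^ 2 * Polynomial.C (X 1)
        - (Polynomial.C (X 0 : R2')) ^ (2 * j + 5)
      = Polynomial.C ((X 1 : R2') ^ (2 * j + 3)) * Polynomial.X ^ 2
        + Polynomial.C (2 * (X 0 : R2') ^ (j + 2) * (X 1) ^ (j + 2)) * Polynomial.X
        + Polynomial.C ((X 0 : R2') ^ (2 * j + 4) * X 1 - (X 0) ^ (2 * j + 5)) := by
    rw [map_pow, map_mul, map_mul, map_pow, map_pow, map_sub, map_mul, map_pow, map_pow,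
      map_ofNat]
    ring
  rw [heq]
  exact key_irred' j

end
end
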